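/- Let R be a Boolean ring and a = Σ_{i≥0} a_i x^i ∈ R[x]. Then a lies in the set {b - b^2 : b ∈ R[x]} if and only if a_0 = 0 and, for every i ≥ 0, the (finite) sum Σ_{j≥0} a_{(2i+1)·2^j} equals 0 in R. -/

import Mathlib

open Polynomial

section Aux

variable {R : Type*} [CommRing R]

lemma halfpow (m j : ℕ) : m * 2 ^ (j + 1) / 2 = m * 2 ^ j := by
  have h : m * 2 ^ (j + 1) = (m * 2 ^ j) * 2 := by ring
  rw [h]; omega

/-- `auxf a n = ∑_{k ≤ j} a_{m·2^k}` where `n = m·2^j` with `m` odd. -/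
noncomputable def auxf (a : R[X]) : ℕ → R
  | 0 => 0
  | (n+1) => a.coeff (n+1) + (if 2 ∣ (n+1) then auxf a ((n+1)/2) else 0)
decreasing_by exact Nat.div_lt_self (Nat.succ_pos n) one_lt_two

lemma auxf_zero (a : R[X]) : auxf a 0 = 0 := by rw [auxf]

lemma auxf_spec (a : R[X]) (n : ℕ) (hn : n ≠ 0) :
    auxf a n = a.coeff n + (if 2 ∣ n then auxf a (n/2) else 0) := by
  obtain ⟨k, rfl⟩ := Nat.exists_eq_succ_of_ne_zero hn
  rw [auxf]

variable (hB : ∀ r : R, r ^ 2 = r)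

include hB

lemma add_self_zero (x : R) : x + x = 0 := by
  linear_combination hB (x + x) - 4 * hB x

lemma sub_eq_add' (x y : R) : x - y = x + y := by
  linear_combination (-1 : R) * add_self_zero hB y

lemma poly_add_self (p : R[X]) : p + p = 0 := by
  ext n; simp [add_self_zero hB]

lemma sq_coeff (b : R[X]) (n : ℕ) :
    (b ^ 2).coeff n = if 2 ∣ n then b.coeff (n / 2) else 0 := by
  induction b using Polynomial.induction_on' with
  | add p q hp hq =>
      have h : (p + q) ^ 2 = p ^ 2 + q ^ 2 := by
        linear_combination poly_add_self hB (p * q)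
      rw [h, coeff_add, hp, hq, coeff_add]
      split_ifs <;> simp
  | monomial k c =>
      simp only [Polynomial.monomial_pow, Polynomial.coeff_monomial, hB]
      by_cases h : k * 2 = n
      · subst h
        rw [if_pos rfl, if_pos ⟨k, by ring⟩, if_pos (by omega)]
      · rw [if_neg h]
        by_cases h2 : 2 ∣ n
        · rw [if_pos h2, if_neg (by omega)]
        · rw [if_neg h2]

lemma auxf_eq_sum (a : R[X]) (m : ℕ) (hm : Odd m) (j : ℕ) :
    auxf a (m * 2 ^ j) = ∑ k ∈ Finset.range (j + 1), a.coeff (m * 2 ^ k) := by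
  induction j with
  | zero =>
      have hm0 : m % 2 = 1 := Nat.odd_iff.mp hm
      simp only [pow_zero, mul_one, Finset.sum_range_one]
      rw [auxf_spec a m (by omega), if_neg (by omega), add_zero]
      simp
  | succ j ih =>
      have hm0 : m % 2 = 1 := Nat.odd_iff.mp hm
      have hne : m * 2 ^ (j + 1) ≠ 0 :=
        Nat.mul_ne_zero (by omega) (pow_ne_zero _ two_ne_zero)
      have hdvd : 2 ∣ m * 2 ^ (j + 1) := ⟨m * 2 ^ j, by ring⟩
      rw [auxf_spec a _ hne, if_pos hdvd, halfpow, ih,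
        Finset.sum_range_succ _ (j + 1)]
      exact add_comm _ _

end Aux

/-- Let `R` be a Boolean ring and `a = Σ_{i≥0} a_i x^i ∈ R[x]`. Then `a` lies in the
set `{b - b^2 : b ∈ R[x]}` if and only if `a_0 = 0` and, for every `i ≥ 0`, the
(finite) sum `Σ_{j≥0} a_{(2i+1)·2^j}` equals `0` in `R`. -/
theorem stmt_3 (R : Type*) [CommRing R] (hB : ∀ r : R, r ^ 2 = r) (a : R[X]) :
    (∃ b : R[X], a = b - b ^ 2) ↔
      (a.coeff 0 = 0 ∧ ∀ i : ℕ, ∑ᶠ j : ℕ, a.coeff ((2 * i + 1) * 2 ^ j) = 0) := by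
  constructor
  · rintro ⟨b, rfl⟩
    have hc : ∀ n, (b - b ^ 2).coeff n =
        b.coeff n + (if 2 ∣ n then b.coeff (n / 2) else 0) := by
      intro n
      rw [coeff_sub, sq_coeff hB, sub_eq_add' hB]
    constructor
    · rw [hc 0]
      simpa using add_self_zero hB (b.coeff 0)
    · intro i
      set m := 2 * i + 1 with hmdef
      have hmodd : ¬ (2 ∣ m) := by omega
      set J := (b - b ^ 2).natDegree + b.natDegree + 1 with hJ
      set g : ℕ → R := fun j => b.coeff (m * 2 ^ j) with hg
      have hterm : ∀ j, (b - b ^ 2).coeff (m * 2 ^ j) =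
          g j + (if j = 0 then 0 else g (j - 1)) := by
        intro j
        rw [hc]
        cases j with
        | zero =>
            rw [if_neg (by simpa using hmodd), if_pos rfl, add_zero]
        | succ j =>
            rw [if_pos ⟨m * 2 ^ j, by ring⟩, if_neg (Nat.succ_ne_zero j), halfpow]
            simp [hg]
      have hbig : ∀ {n j : ℕ}, n ≤ J → J + 1 ≤ j → n < m * 2 ^ j := by
        intro n j h1 h2
        have h3 : j < 2 ^ j := Nat.lt_two_pow_self (n := j)
        have h4 : n < 2 ^ j := by omega
        calc n < 2 ^ j := h4
        _ ≤ m * 2 ^ j := Nat.le_mul_of_pos_left _ (by omega)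
      have hsupp : Function.support (fun j => (b - b ^ 2).coeff (m * 2 ^ j)) ⊆
          ↑(Finset.range (J + 1)) := by
        intro j hj
        by_contra hjr
        simp only [Finset.coe_range, Set.mem_Iio, not_lt] at hjr
        exact hj (coeff_eq_zero_of_natDegree_lt (hbig (by omega) hjr))
      rw [finsum_eq_finset_sum_of_support_subset _ hsupp]
      have hshift : ∑ j ∈ Finset.range (J + 1), (if j = 0 then 0 else g (j - 1)) =
          ∑ j ∈ Finset.range J, g j := by
        rw [Finset.sum_range_succ']
        simp
      calc ∑ j ∈ Finset.range (J + 1), (b - b ^ 2).coeff (m * 2 ^ j)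
          = ∑ j ∈ Finset.range (J + 1), (g j + if j = 0 then 0 else g (j - 1)) :=
            Finset.sum_congr rfl fun j _ => hterm j
        _ = (∑ j ∈ Finset.range (J + 1), g j) +
              ∑ j ∈ Finset.range (J + 1), (if j = 0 then 0 else g (j - 1)) :=
            Finset.sum_add_distrib
        _ = (∑ j ∈ Finset.range (J + 1), g j) + ∑ j ∈ Finset.range J, g j := by
            rw [hshift]
        _ = g J + ((∑ j ∈ Finset.range J, g j) + (∑ j ∈ Finset.range J, g j)) := by
            rw [Finset.sum_range_succ]; ring
        _ = 0 := by
            rw [add_self_zero hB, add_zero, hg]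
            refine coeff_eq_zero_of_natDegree_lt ?_
            calc b.natDegree < 2 ^ J := lt_of_le_of_lt (by omega) (Nat.lt_two_pow_self (n := J))
            _ ≤ m * 2 ^ J := Nat.le_mul_of_pos_left _ (by omega)
  · rintro ⟨h0, hsum⟩
    set N := a.natDegree + 1 with hN
    have hvanish : ∀ n, a.natDegree < n → auxf a n = 0 := by
      intro n hn
      have hn0 : n ≠ 0 := by omega
      obtain ⟨j, m, hmodd, rfl⟩ := Nat.exists_eq_two_pow_mul_odd hn0
      rw [mul_comm] at hn ⊢
      obtain ⟨i, rfl⟩ := hmodd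
      rw [auxf_eq_sum hB a _ ⟨i, rfl⟩ j]
      rw [← finsum_eq_finset_sum_of_support_subset _
        (s := Finset.range (j + 1)) ?_]
      · exact hsum i
      · intro k hk
        by_contra hkr
        simp only [Finset.coe_range, Set.mem_Iio, not_lt] at hkr
        refine hk (coeff_eq_zero_of_natDegree_lt ?_)
        calc a.natDegree < (2 * i + 1) * 2 ^ j := hn
        _ ≤ (2 * i + 1) * 2 ^ k :=
            Nat.mul_le_mul_left _ (Nat.pow_le_pow_right (by omega) (by omega))
    set b : R[X] := ∑ n ∈ Finset.range N, monomial n (auxf a n) with hbdef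
    have hb : ∀ k, b.coeff k = auxf a k := by
      intro k
      rw [hbdef, finset_sum_coeff]
      simp only [coeff_monomial]
      rw [Finset.sum_ite_eq' (Finset.range N) k (fun n => auxf a n)]
      split_ifs with h
      · rfl
      · rw [hvanish k (by simp [hN] at h; omega)]
    refine ⟨b, ?_⟩
    ext n
    rw [coeff_sub, sq_coeff hB, sub_eq_add' hB, hb]
    cases n with
    | zero => simp [auxf_zero, h0, hb]
    | succ n =>
        rw [hb, auxf_spec a _ (Nat.succ_ne_zero n)]
        set t := if 2 ∣ (n + 1) then auxf a ((n + 1) / 2) else 0 with ht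
        linear_combination (-1 : R) * add_self_zero hB t
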